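/- If $\mathcal{A}$ is a maximal ideal independent family, then every $C \in \mathcal{A}^+$ (i.e., infinite $C \subseteq \omega$ not almost covered by a finite union of members of $\mathcal{A}$) has an accumulation point in the space $\psi(\mathcal{A})$. Conversely, if all but finitely many of the filters $\mathcal{F}(\mathcal{A}, A)$, $A \in \mathcal{A}$, are ultrafilters and every $C \in \mathcal{A}^+$ has an accumulation point in $\psi(\mathcal{A})$, then $\mathcal{A}$ is maximal. -/

import Mathlib

/-- A family of infinite subsets of ω is *ideal independent* if no member is
almost covered by finitely many of the others. -/
def IdealIndependent (A : Set (Set ℕ)) : Prop :=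
  (∀ X ∈ A, X.Infinite) ∧
  ∀ X ∈ A, ∀ F : Finset (Set ℕ), ↑F ⊆ A \ {X} → (X \ ⋃ Y ∈ F, Y).Infinite

/-- Maximal ideal independent family: no ideal independent family properly contains it. -/
def MaximalIdealIndependent (A : Set (Set ℕ)) : Prop :=
  IdealIndependent A ∧ ∀ B : Set (Set ℕ), IdealIndependent B → A ⊆ B → B = A

/-- Generating sets of the complemented filter `𝓕(A, X)`. -/
def genSets (A : Set (Set ℕ)) (X : Set ℕ) : Set (Set ℕ) :=
  {S | ∃ F : Finset (Set ℕ), ↑F ⊆ A \ {X} ∧ S = X \ ⋃ Y ∈ F, Y}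

/-- The complemented filter `𝓕(A, X)` generated by the sets `X \ ⋃ 𝓑`,
`𝓑` a finite subset of `A \ {X}`. -/
def complFilter (A : Set (Set ℕ)) (X : Set ℕ) : Filter ℕ :=
  Filter.generate (genSets A X)

/-- The ideal `𝓙(A)` generated by the pairwise intersections of distinct members
of `A` together with the finite sets. -/
def idealJ (A : Set (Set ℕ)) : Set (Set ℕ) :=
  {X | ∃ F : Finset (Set ℕ × Set ℕ),
    (∀ p ∈ F, p.1 ∈ A ∧ p.2 ∈ A ∧ p.1 ≠ p.2) ∧
    (X \ ⋃ p ∈ F, p.1 ∩ p.2).Finite}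

/-- The Mrówka-type topology on `ω ⊕ A`: naturals are isolated and a basic neighborhood
of `A ∈ 𝒜` is `{A} ∪ F` for `F ∈ 𝓕(𝒜, A)`. -/
def psiTop (A : Set (Set ℕ)) : TopologicalSpace (ℕ ⊕ ↥A) where
  IsOpen U := ∀ a : ↥A, Sum.inr a ∈ U → ∃ F ∈ complFilter A a.1, ∀ n ∈ F, Sum.inl n ∈ U
  isOpen_univ := fun _ _ => ⟨Set.univ, Filter.univ_mem, fun _ _ => trivial⟩
  isOpen_inter := by
    intro U V hU hV a ha
    obtain ⟨F1, hF1, h1⟩ := hU a ha.1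
    obtain ⟨F2, hF2, h2⟩ := hV a ha.2
    exact ⟨F1 ∩ F2, Filter.inter_mem hF1 hF2, fun n hn => ⟨h1 n hn.1, h2 n hn.2⟩⟩
  isOpen_sUnion := by
    intro S hS a ha
    obtain ⟨U, hU, haU⟩ := ha
    obtain ⟨F, hF, h⟩ := hS U hU a haU
    exact ⟨F, hF, fun n hn => ⟨U, hU, h n hn⟩⟩

/-- `A⁺`: infinite sets not almost covered by finitely many members of `A`. -/
def posSet (A : Set (Set ℕ)) : Set (Set ℕ) :=
  {X | X.Infinite ∧ ∀ F : Finset (Set ℕ), ↑F ⊆ A → ¬(X \ ⋃ Y ∈ F, Y).Finite}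

/-- `x` is an accumulation point of `S` in `ψ(A)`. -/
def AccPoint (A : Set (Set ℕ)) (x : ℕ ⊕ ↥A) (S : Set (ℕ ⊕ ↥A)) : Prop :=
  ∀ U : Set (ℕ ⊕ ↥A), @IsOpen _ (psiTop A) U → x ∈ U → ∃ y ∈ S ∩ U, y ≠ x

/-- A filter on ω is an ultrafilter. -/
def IsUltra (F : Filter ℕ) : Prop := F.NeBot ∧ ∀ S : Set ℕ, S ∈ F ∨ Sᶜ ∈ F

lemma mem_complFilter {A : Set (Set ℕ)} {a s : Set ℕ} :
    s ∈ complFilter A a ↔ ∃ F : Finset (Set ℕ), ↑F ⊆ A \ {a} ∧ (a \ ⋃ Y ∈ F, Y) ⊆ s := by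
  classical
  constructor
  · intro hs
    rw [complFilter, Filter.mem_generate_iff] at hs
    obtain ⟨t, htg, htf, hts⟩ := hs
    have key : t ⊆ genSets A a →
        ∃ F : Finset (Set ℕ), ↑F ⊆ A \ {a} ∧ (a \ ⋃ Y ∈ F, Y) ⊆ ⋂₀ t := by
      refine Set.Finite.induction_on
        (motive := fun t _ => t ⊆ genSets A a →
          ∃ F : Finset (Set ℕ), ↑F ⊆ A \ {a} ∧ (a \ ⋃ Y ∈ F, Y) ⊆ ⋂₀ t)
        t htf (fun _ => ⟨∅, by simp, by simp⟩) ?_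
      intro g t' hni hfin ih hsub
      obtain ⟨Fg, hFg, hgeq⟩ := hsub (Set.mem_insert _ _)
      obtain ⟨F', hF', hF'sub⟩ := ih (fun x hx => hsub (Set.mem_insert_of_mem _ hx))
      refine ⟨Fg ∪ F', by rw [Finset.coe_union]; exact Set.union_subset hFg hF', ?_⟩
      intro n hn
      rw [Set.sInter_insert]
      constructor
      · rw [hgeq]
        exact ⟨hn.1, fun h => hn.2 (by
          obtain ⟨Y, hY, hnY⟩ := Set.mem_iUnion₂.mp h
          exact Set.mem_iUnion₂.mpr ⟨Y, Finset.mem_union_left _ hY, hnY⟩)⟩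
      · exact hF'sub ⟨hn.1, fun h => hn.2 (by
          obtain ⟨Y, hY, hnY⟩ := Set.mem_iUnion₂.mp h
          exact Set.mem_iUnion₂.mpr ⟨Y, Finset.mem_union_right _ hY, hnY⟩)⟩
    obtain ⟨F, hF, hFsub⟩ := key htg
    exact ⟨F, hF, hFsub.trans hts⟩
  · rintro ⟨F, hF, hsub⟩
    exact Filter.mem_of_superset (f := complFilter A a)
      (Filter.mem_generate_of_mem ⟨F, hF, rfl⟩) hsub

lemma basic_open {A : Set (Set ℕ)} (a : ↥A) {F : Set ℕ} (hF : F ∈ complFilter A a.1) :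
    @IsOpen _ (psiTop A) (insert (Sum.inr a) (Sum.inl '' F) : Set (ℕ ⊕ ↥A)) := by
  intro b hb
  have hba : b = a := by
    rcases hb with hb | hb
    · exact Sum.inr.inj hb
    · obtain ⟨n, _, hn⟩ := hb
      exact absurd hn (by simp)
  subst hba
  exact ⟨F, hF, fun n hn => Or.inr ⟨n, hn, rfl⟩⟩

/-- If `A` is maximal, every `C ∈ A⁺` has an accumulation point in `ψ(A)`; conversely,
if all but finitely many complemented filters are ultrafilters and every `C ∈ A⁺` has an
accumulation point, then `A` is maximal. -/
theorem stmt17 (A : Set (Set ℕ)) (hA : IdealIndependent A) :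
    (MaximalIdealIndependent A →
      ∀ C ∈ posSet A, ∃ x : ℕ ⊕ ↥A, AccPoint A x (Sum.inl '' C)) ∧
    (({B | B ∈ A ∧ ¬ IsUltra (complFilter A B)}.Finite ∧
      (∀ C ∈ posSet A, ∃ x : ℕ ⊕ ↥A, AccPoint A x (Sum.inl '' C))) →
      MaximalIdealIndependent A) := by
  classical
  constructor
  · -- maximal → accumulation points exist
    intro hmax C hC
    by_contra hno
    push_neg at hno
    have hsep : ∀ a : ↥A, ∃ 𝓑 : Finset (Set ℕ), ↑𝓑 ⊆ A \ {a.1} ∧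
        C ∩ a.1 ⊆ ⋃ Y ∈ 𝓑, Y := by
      intro a
      have h := hno (Sum.inr a)
      unfold AccPoint at h
      push_neg at h
      obtain ⟨U, hUopen, haU, hU⟩ := h
      obtain ⟨F, hF, hFU⟩ := hUopen a haU
      obtain ⟨𝓑, h𝓑, hsub⟩ := mem_complFilter.mp hF
      refine ⟨𝓑, h𝓑, ?_⟩
      intro n hn
      by_contra hnB
      have hnF : n ∈ F := hsub ⟨hn.2, hnB⟩
      have heq := hU (Sum.inl n) ⟨⟨n, hn.1, rfl⟩, hFU n hnF⟩
      exact Sum.inl_ne_inr heq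
    have hCnotA : C ∉ A := by
      intro hCA
      exact hC.2 {C} (by simp [hCA]) (by simp)
    have hBind : IdealIndependent (insert C A) := by
      constructor
      · rintro X (rfl | hXA)
        · exact hC.1
        · exact hA.1 X hXA
      · rintro X (rfl | hXA) F hFsub
        · have hFA : ↑F ⊆ A := by
            intro Y hY
            have := hFsub hY
            rcases this.1 with rfl | h
            · exact absurd rfl this.2
            · exact h
          exact fun hfin => hC.2 F hFA hfin
        · by_cases hCF : C ∈ F
          · obtain ⟨𝓑, h𝓑, hcov⟩ := hsep ⟨X, hXA⟩
            have hsub2 : ↑(𝓑 ∪ F.erase C) ⊆ A \ {X} := by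
              intro Y hY
              rw [Finset.coe_union, Set.mem_union] at hY
              rcases hY with hY | hY
              · exact h𝓑 hY
              · have hYF := Finset.mem_erase.mp hY
                have := hFsub hYF.2
                rcases this.1 with rfl | h
                · exact absurd rfl hYF.1
                · exact ⟨h, this.2⟩
            have hinf := hA.2 X hXA (𝓑 ∪ F.erase C) hsub2
            refine hinf.mono ?_
            rintro n ⟨hnX, hn⟩
            refine ⟨hnX, fun hmem => ?_⟩
            obtain ⟨Y, hYF, hnY⟩ := Set.mem_iUnion₂.mp hmem
            by_cases hYC : Y = C
            · subst hYC
              have : n ∈ ⋃ Z ∈ 𝓑, Z := hcov ⟨hnY, hnX⟩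
              obtain ⟨Z, hZ, hnZ⟩ := Set.mem_iUnion₂.mp this
              exact hn (Set.mem_iUnion₂.mpr ⟨Z, Finset.mem_union_left _ hZ, hnZ⟩)
            · exact hn (Set.mem_iUnion₂.mpr
                ⟨Y, Finset.mem_union_right _ (Finset.mem_erase.mpr ⟨hYC, hYF⟩), hnY⟩)
          · have hFA : ↑F ⊆ A \ {X} := by
              intro Y hY
              have := hFsub hY
              rcases this.1 with rfl | h
              · exact absurd hY hCF
              · exact ⟨h, this.2⟩
            exact hA.2 X hXA F hFA
    have heq := hmax.2 _ hBind (Set.subset_insert C A)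
    exact hCnotA (heq ▸ Set.mem_insert C A)
  · -- converse
    rintro ⟨hfin, hacc⟩
    refine ⟨hA, ?_⟩
    intro B hB hAB
    by_contra hne
    have hex : ∃ C, C ∈ B ∧ C ∉ A := by
      by_contra h
      push_neg at h
      exact hne (Set.Subset.antisymm h hAB)
    obtain ⟨C, hCB, hCA⟩ := hex
    have hCpos : C ∈ posSet A := by
      refine ⟨hB.1 C hCB, fun F hF hfin' => ?_⟩
      refine (hB.2 C hCB F ?_) hfin'
      intro Y hY
      exact ⟨hAB (hF hY), fun h => hCA (Set.mem_singleton_iff.mp h ▸ hF hY)⟩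
    set G := hfin.toFinset with hGdef
    have hGA : ↑G ⊆ A := fun Y hY => (hfin.mem_toFinset.mp hY).1
    set D := C \ ⋃ Y ∈ G, Y with hDdef
    have hDpos : D ∈ posSet A := by
      constructor
      · exact hCpos.2 G hGA
      · intro F hF hfinD
        refine hCpos.2 (G ∪ F) (by
          rw [Finset.coe_union]; exact Set.union_subset hGA hF) ?_
        refine hfinD.subset ?_
        rintro n ⟨hnC, hn⟩
        refine ⟨⟨hnC, fun h => ?_⟩, fun h => ?_⟩
        · obtain ⟨Y, hY, hnY⟩ := Set.mem_iUnion₂.mp h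
          exact hn (Set.mem_iUnion₂.mpr ⟨Y, Finset.mem_union_left _ hY, hnY⟩)
        · obtain ⟨Y, hY, hnY⟩ := Set.mem_iUnion₂.mp h
          exact hn (Set.mem_iUnion₂.mpr ⟨Y, Finset.mem_union_right _ hY, hnY⟩)
    obtain ⟨x, hx⟩ := hacc D hDpos
    obtain ⟨a, rfl⟩ : ∃ a : ↥A, x = Sum.inr a := by
      cases x with
      | inl n =>
        exfalso
        have hopen : @IsOpen _ (psiTop A) ({Sum.inl n} : Set (ℕ ⊕ ↥A)) := by
          intro b hb
          exact absurd hb (by simp)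
        obtain ⟨y, ⟨hyD, hyU⟩, hyne⟩ := hx _ hopen rfl
        exact hyne hyU
      | inr a => exact ⟨a, rfl⟩
    have key : ∀ F ∈ complFilter A a.1, (D ∩ F).Nonempty := by
      intro F hFmem
      obtain ⟨y, ⟨hyD, hyU⟩, _⟩ := hx _ (basic_open a hFmem) (Set.mem_insert _ _)
      obtain ⟨n, hnD, rfl⟩ := hyD
      rcases hyU with h | h
      · exact absurd h (by simp)
      · obtain ⟨m, hmF, hm⟩ := h
        exact ⟨n, hnD, Sum.inl.inj hm ▸ hmF⟩
    have hultra : IsUltra (complFilter A a.1) := by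
      by_contra hnu
      have haG : a.1 ∈ G := hfin.mem_toFinset.mpr ⟨a.2, hnu⟩
      have hagen : a.1 ∈ complFilter A a.1 :=
        mem_complFilter.mpr ⟨∅, by simp, by simp⟩
      obtain ⟨n, hnD, hna⟩ := key _ hagen
      exact hnD.2 (Set.mem_iUnion₂.mpr ⟨a.1, haG, hna⟩)
    have hDmem : D ∈ complFilter A a.1 := by
      rcases hultra.2 D with h | h
      · exact h
      · exfalso
        obtain ⟨n, hnD, hnDc⟩ := key _ h
        exact hnDc hnD
    obtain ⟨𝓑, h𝓑, hsub⟩ := mem_complFilter.mp hDmem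
    have hfam : ↑(insert C 𝓑) ⊆ B \ {a.1} := by
      intro Y hY
      rw [Finset.coe_insert, Set.mem_insert_iff] at hY
      rcases hY with rfl | hY
      · exact ⟨hCB, fun h => hCA (Set.mem_singleton_iff.mp h ▸ a.2)⟩
      · have := h𝓑 hY
        exact ⟨hAB this.1, this.2⟩
    have hinf := hB.2 a.1 (hAB a.2) _ hfam
    refine hinf (Set.Finite.subset Set.finite_empty ?_)
    rintro n ⟨hna, hn⟩
    exfalso
    have hnD : n ∈ D := hsub ⟨hna, fun h => by
      obtain ⟨Y, hY, hnY⟩ := Set.mem_iUnion₂.mp h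
      exact hn (Set.mem_iUnion₂.mpr ⟨Y, Finset.mem_insert_of_mem hY, hnY⟩)⟩
    exact hn (Set.mem_iUnion₂.mpr ⟨C, Finset.mem_insert_self _ _, hnD.1⟩)
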